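/- Let M₁ ∈ GL₄(ℚ) be the cyclic permutation matrix sending the standard basis vectors e₁ ↦ e₄ ↦ e₃ ↦ e₂ ↦ e₁ (i.e., the matrix with rows (0,1,0,0), (0,0,1,0), (0,0,0,1), (1,0,0,0)). Then every 2-dimensional ℚ-vector subspace of ℚ⁴ invariant under M₁ is equal either to span{(0,1,0,1), (1,0,1,0)} or to span{(0,−1,0,1), (1,0,−1,0)}. -/

import Mathlib

/-- The cyclic permutation matrix `M₁` with rows `(0,1,0,0), (0,0,1,0), (0,0,0,1), (1,0,0,0)`. -/
def M₁ : Matrix (Fin 4) (Fin 4) ℚ :=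
  !![0, 1, 0, 0; 0, 0, 1, 0; 0, 0, 0, 1; 1, 0, 0, 0]

lemma M₁_mulVec (w : Fin 4 → ℚ) : M₁.mulVec w = ![w 1, w 2, w 3, w 0] := by
  funext i; fin_cases i <;> simp [M₁, Matrix.mulVec, dotProduct, Fin.sum_univ_four, Matrix.vecHead, Matrix.vecTail]

/-- Every 2-dimensional `ℚ`-subspace of `ℚ⁴` invariant under `M₁` equals
either `span{(0,1,0,1), (1,0,1,0)}` or `span{(0,−1,0,1), (1,0,−1,0)}`. -/
theorem invariant_planes_of_M₁
    (W : Submodule ℚ (Fin 4 → ℚ))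
    (hdim : Module.finrank ℚ W = 2)
    (hinv : ∀ v ∈ W, M₁.mulVec v ∈ W) :
    W = Submodule.span ℚ {![0, 1, 0, 1], ![1, 0, 1, 0]} ∨
    W = Submodule.span ℚ {![0, -1, 0, 1], ![1, 0, -1, 0]} := by
  by_cases hP : ∀ w ∈ W, M₁.mulVec (M₁.mulVec w) = w
  · left
    have hle : W ≤ Submodule.span ℚ {![0, 1, 0, 1], ![1, 0, 1, 0]} := by
      intro w hw
      have h := hP w hw
      rw [M₁_mulVec, M₁_mulVec] at h
      have h0 : w 2 = w 0 := congrFun h 0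
      have h1 : w 3 = w 1 := congrFun h 1
      have hwe : w = w 1 • ![0, 1, 0, 1] + w 0 • ![1, 0, 1, 0] := by
        funext i; fin_cases i <;> simp [h0, h1]
      rw [hwe]
      exact Submodule.add_mem _
        (Submodule.smul_mem _ _ (Submodule.subset_span (by simp)))
        (Submodule.smul_mem _ _ (Submodule.subset_span (by simp)))
    have hrange : Set.range ![![0, 1, 0, 1], ![(1:ℚ), 0, 1, 0]] =
        ({![0, 1, 0, 1], ![1, 0, 1, 0]} : Set (Fin 4 → ℚ)) := by
      simp [Matrix.range_cons, Matrix.range_empty, Set.pair_comm]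
    have hfr : Module.finrank ℚ (Submodule.span ℚ
        ({![0, 1, 0, 1], ![1, 0, 1, 0]} : Set (Fin 4 → ℚ))) ≤ 2 := by
      rw [← hrange]
      exact (finrank_span_le_card _).trans (by simp)
    exact Submodule.eq_of_le_of_finrank_le hle (hdim ▸ hfr)
  · right
    push_neg at hP
    obtain ⟨w, hw, hne⟩ := hP
    set a : ℚ := w 0 - w 2 with ha
    set b : ℚ := w 1 - w 3 with hb
    have hu : (w - M₁.mulVec (M₁.mulVec w)) = ![a, b, -a, -b] := by
      rw [M₁_mulVec, M₁_mulVec]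
      funext i; fin_cases i <;> simp [ha, hb] <;> ring
    have huW : (![a, b, -a, -b] : Fin 4 → ℚ) ∈ W := by
      rw [← hu]; exact Submodule.sub_mem _ hw (hinv _ (hinv _ hw))
    have htuW : (![b, -a, -b, a] : Fin 4 → ℚ) ∈ W := by
      have := hinv _ huW
      rw [M₁_mulVec] at this
      convert this using 1
      simp
    have hab : a ≠ 0 ∨ b ≠ 0 := by
      by_contra hc
      push_neg at hc
      apply hne
      rw [M₁_mulVec, M₁_mulVec]
      have h2 : w 2 = w 0 := by have := hc.1; rw [ha] at this; linarith
      have h3 : w 3 = w 1 := by have := hc.2; rw [hb] at this; linarith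
      funext i; fin_cases i <;> simp [h2, h3]
    have hs : a ^ 2 + b ^ 2 ≠ 0 := by
      rcases hab with h | h
      · positivity
      · positivity
    set s : ℚ := a ^ 2 + b ^ 2 with hsdef
    have hv2 : (![1, 0, -1, 0] : Fin 4 → ℚ) ∈ W := by
      have hmem : (a / s) • (![a, b, -a, -b] : Fin 4 → ℚ)
          + (b / s) • (![b, -a, -b, a] : Fin 4 → ℚ) ∈ W :=
        Submodule.add_mem _ (Submodule.smul_mem _ _ huW) (Submodule.smul_mem _ _ htuW)
      convert hmem using 1
      funext i; fin_cases i <;> simp <;> field_simp <;> ring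
    have hv1 : (![0, -1, 0, 1] : Fin 4 → ℚ) ∈ W := by
      have hmem : (-(b / s)) • (![a, b, -a, -b] : Fin 4 → ℚ)
          + (a / s) • (![b, -a, -b, a] : Fin 4 → ℚ) ∈ W :=
        Submodule.add_mem _ (Submodule.smul_mem _ _ huW) (Submodule.smul_mem _ _ htuW)
      convert hmem using 1
      funext i; fin_cases i <;> simp <;> field_simp <;> ring
    have hle : Submodule.span ℚ ({![0, -1, 0, 1], ![1, 0, -1, 0]} : Set (Fin 4 → ℚ)) ≤ W := by
      rw [Submodule.span_le]
      rintro x (rfl | rfl)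
      · exact hv1
      · exact hv2
    have hind : LinearIndependent ℚ ![![0, -1, 0, 1], ![(1:ℚ), 0, -1, 0]] := by
      rw [LinearIndependent.pair_iff]
      intro p q h
      have h0 := congrFun h 1
      have h1 := congrFun h 0
      simp at h0 h1
      exact ⟨h0, h1⟩
    have hrange : Set.range ![![0, -1, 0, 1], ![(1:ℚ), 0, -1, 0]] =
        ({![0, -1, 0, 1], ![1, 0, -1, 0]} : Set (Fin 4 → ℚ)) := by
      simp [Matrix.range_cons, Matrix.range_empty, Set.pair_comm]
    have hfr : Module.finrank ℚ (Submodule.span ℚ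
        ({![0, -1, 0, 1], ![1, 0, -1, 0]} : Set (Fin 4 → ℚ))) = 2 := by
      rw [← hrange, finrank_span_eq_card hind]; simp
    exact (Submodule.eq_of_le_of_finrank_le hle (by rw [hfr, hdim])).symm
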